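/- Let Ω ⊂ ℝ^(2n+1−k) be open and φ : Ω → ℝ^k continuous. Then for all a, b ∈ Ω, ρ_φ(a,b) ≤ ‖Φ(b)^{-1}·Φ(a)‖_∞ ≤ d_φ(a,b) + |φ(a) − φ(b)|. -/

import Mathlib

open scoped BigOperators
open MeasureTheory Filter Topology

noncomputable section

namespace HeisGraph

/-! ### Points of the Heisenberg group ℍⁿ, identified with ℝ^{2n+1} -/

/-- Index type for the coordinates of a point of ℍⁿ: `x`-coordinates, `y`-coordinates
and the vertical coordinate `t`. -/
abbrev HIdxT (n : ℕ) := Sum (Fin n) (Sum (Fin n) Unit)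

/-- ℍⁿ as a Euclidean space (so that the Euclidean norm is available). -/
abbrev HP (n : ℕ) := EuclideanSpace ℝ (HIdxT n)

variable {n k : ℕ}

def xPart (p : HP n) (i : Fin n) : ℝ := p (Sum.inl i)
def yPart (p : HP n) (i : Fin n) : ℝ := p (Sum.inr (Sum.inl i))
def tPart (p : HP n) : ℝ := p (Sum.inr (Sum.inr ()))

def mkH (x y : Fin n → ℝ) (t : ℝ) : HP n :=
  WithLp.toLp 2 (fun i => Sum.elim x (Sum.elim y (fun _ => t)) i)

/-- The Heisenberg group product on ℝ^{2n+1}. -/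
def hMul (p q : HP n) : HP n :=
  mkH (fun i => xPart p i + xPart q i) (fun i => yPart p i + yPart q i)
    (tPart p + tPart q + (1 / 2) * ∑ i : Fin n, (xPart p i * yPart q i - xPart q i * yPart p i))

/-- The Heisenberg group inverse: `p⁻¹ = -p`. -/
def hInv (p : HP n) : HP n := -p

/-- The intrinsic dilations of ℍⁿ. -/
def dilH (lam : ℝ) (p : HP n) : HP n :=
  mkH (fun i => lam * xPart p i) (fun i => lam * yPart p i) (lam ^ 2 * tPart p)

/-- The homogeneous norm `‖p‖_∞ = max { |(x,y)| , |t|^{1/2} }`. -/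
def normH (p : HP n) : ℝ :=
  max (Real.sqrt (∑ i, xPart p i ^ 2 + ∑ i, yPart p i ^ 2)) (Real.sqrt |tPart p|)

/-- The homogeneous distance `d_∞(p,q) = ‖q⁻¹ · p‖_∞`. -/
def dInf (p q : HP n) : ℝ := normH (hMul (hInv q) p)

/-! ### Points of 𝕄 ≅ ℝ^{2n+1-k}: coordinates (v_{k+1..n}, η_{1..k}, w_{k+1..n}, τ) -/

abbrev MIdxT (n k : ℕ) := Sum (Fin (n - k)) (Sum (Fin k) (Sum (Fin (n - k)) Unit))

abbrev MP (n k : ℕ) := EuclideanSpace ℝ (MIdxT n k)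

def vPart (a : MP n k) (j : Fin (n - k)) : ℝ := a (Sum.inl j)
def etaPart (a : MP n k) (i : Fin k) : ℝ := a (Sum.inr (Sum.inl i))
def wPart (a : MP n k) (j : Fin (n - k)) : ℝ := a (Sum.inr (Sum.inr (Sum.inl j)))
def tauPart (a : MP n k) : ℝ := a (Sum.inr (Sum.inr (Sum.inr ())))

def mkM (v : Fin (n - k) → ℝ) (η : Fin k → ℝ) (w : Fin (n - k) → ℝ) (τ : ℝ) : MP n k :=
  WithLp.toLp 2 (fun i => Sum.elim v (Sum.elim η (Sum.elim w (fun _ => τ))) i)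

/-- The embedding `i : ℝ^{2n+1-k} → ℍⁿ` onto the subgroup 𝕄 (`k` zeros among the
`x`-coordinates first). -/
def iota (a : MP n k) : HP n :=
  mkH (fun i => if h : (i : ℕ) < k then 0 else vPart a ⟨(i : ℕ) - k, by have := i.isLt; omega⟩)
    (fun i => if h : (i : ℕ) < k then etaPart a ⟨(i : ℕ), h⟩
      else wPart a ⟨(i : ℕ) - k, by have := i.isLt; omega⟩)
    (tauPart a)

/-- The embedding `j : ℝ^k → ℍⁿ` onto the horizontal subgroup ℍ. -/
def jmap (h : EuclideanSpace ℝ (Fin k)) : HP n :=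
  mkH (fun i => if hi : (i : ℕ) < k then h ⟨(i : ℕ), hi⟩ else 0) (fun _ => 0) 0

/-- The projection `π_𝕄 : ℍⁿ → 𝕄` determined by the unique factorization `p = m·h`,
`m ∈ 𝕄`, `h ∈ ℍ` (written in the coordinates of `MP n k`). -/
def piM (hk : k ≤ n) (p : HP n) : MP n k :=
  mkM (fun j => xPart p ⟨(j : ℕ) + k, by have := j.isLt; omega⟩)
    (fun i => yPart p ⟨(i : ℕ), lt_of_lt_of_le i.isLt hk⟩)
    (fun j => yPart p ⟨(j : ℕ) + k, by have := j.isLt; omega⟩)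
    (tPart p + (1 / 2) * ∑ i : Fin k,
      xPart p ⟨(i : ℕ), lt_of_lt_of_le i.isLt hk⟩ * yPart p ⟨(i : ℕ), lt_of_lt_of_le i.isLt hk⟩)

/-- The unit vertical vector of `MP n k`. -/
def tauUnit : MP n k := mkM 0 0 0 1

/-- The product `⋆` induced on ℝ^{2n+1-k} by the group structure of 𝕄. -/
def starMul (a b : MP n k) : MP n k :=
  a + b + ((1 / 2) * ∑ j : Fin (n - k), (vPart a j * wPart b j - vPart b j * wPart a j)) • tauUnit

/-- The dilations `δ_λ^⋆` induced on ℝ^{2n+1-k}. -/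
def dilStar (lam : ℝ) (a : MP n k) : MP n k :=
  mkM (fun j => lam * vPart a j) (fun i => lam * etaPart a i) (fun j => lam * wPart a j)
    (lam ^ 2 * tauPart a)

/-- The homogeneous norm of 𝕄 read on `MP n k` (it equals `normH (iota a)`). -/
def normM (a : MP n k) : ℝ :=
  max (Real.sqrt (∑ j, vPart a j ^ 2 + ∑ i, etaPart a i ^ 2 + ∑ j, wPart a j ^ 2))
    (Real.sqrt |tauPart a|)

/-- The graph map `Φ(a) = i(a) · j(φ(a))`. -/
def graphMap (φ : MP n k → EuclideanSpace ℝ (Fin k)) (a : MP n k) : HP n :=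
  hMul (iota a) (jmap (φ a))

/-- The graph distance `d_φ(a,b) = ‖π_𝕄(Φ(b)⁻¹ · Φ(a))‖_∞`. -/
def dPhi (hk : k ≤ n) (φ : MP n k → EuclideanSpace ℝ (Fin k)) (a b : MP n k) : ℝ :=
  normM (piM hk (hMul (hInv (graphMap φ b)) (graphMap φ a)))

/-- `L : ℝ^{2n+1-k} → ℝ^k` is ⋆-linear: a homomorphism for `⋆`, homogeneous of degree 1
for the dilations `δ_λ^⋆`. -/
def IsStarLinear (L : MP n k → EuclideanSpace ℝ (Fin k)) : Prop :=
  (∀ a b, L (starMul a b) = L a + L b) ∧ ∀ lam > (0 : ℝ), ∀ a, L (dilStar lam a) = lam • L a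

/-! ### Horizontal coordinates, matrices, cubes -/

/-- Index type for the `2n-k` horizontal coordinates of `MP n k` (τ deleted). -/
abbrev HorIdx (n k : ℕ) := Sum (Fin (n - k)) (Sum (Fin k) (Fin (n - k)))

/-- The projection `π` deleting the vertical coordinate τ. -/
def piHor (a : MP n k) : HorIdx n k → ℝ :=
  Sum.elim (fun j => vPart a j) (Sum.elim (fun i => etaPart a i) (fun j => wPart a j))

/-- The ⋆-linear map associated to a `k × (2n-k)` matrix: `L(a) = M · π(a)`. -/
def ofMatrix (M : Matrix (Fin k) (HorIdx n k) ℝ) (a : MP n k) : EuclideanSpace ℝ (Fin k) :=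
  WithLp.toLp 2 (fun i => M.mulVec (piHor a) i)

/-- The open coordinate cube `I_r(a)`. -/
def cube (r : ℝ) (a : MP n k) : Set (MP n k) := {p | ∀ i, |p i - a i| < r}

/-- The closed coordinate cube `cl(I_r(a))`. -/
def closedCube (r : ℝ) (a : MP n k) : Set (MP n k) := {p | ∀ i, |p i - a i| ≤ r}

/-! ### Intrinsic differentiability -/

/-- The quantitative condition expressing uniform intrinsic differentiability of `φ`
at `a₀` (relative to `Ω`) with intrinsic differential `L`:
`lim_{r→0} sup_{a,b ∈ I_r(a₀)∩Ω} |φ(b) - φ(a) - L(a⁻¹ ⋆ b)| / d_φ(b,a) = 0`. -/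
def UIDcond (hk : k ≤ n) (Ω : Set (MP n k)) (φ : MP n k → EuclideanSpace ℝ (Fin k))
    (a₀ : MP n k) (L : MP n k → EuclideanSpace ℝ (Fin k)) : Prop :=
  ∀ ε > (0 : ℝ), ∃ r > (0 : ℝ), ∀ a ∈ cube r a₀ ∩ Ω, ∀ b ∈ cube r a₀ ∩ Ω,
    ‖φ b - φ a - L (starMul (-a) b)‖ ≤ ε * dPhi hk φ b a

/-- `φ` is uniformly intrinsic differentiable at `a₀`. -/
def UIDAt (hk : k ≤ n) (Ω : Set (MP n k)) (φ : MP n k → EuclideanSpace ℝ (Fin k))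
    (a₀ : MP n k) : Prop :=
  ∃ L, IsStarLinear L ∧ UIDcond hk Ω φ a₀ L

/-- `φ` is uniformly intrinsic differentiable at `a₀` with intrinsic Jacobian matrix `M`. -/
def UIDAtWith (hk : k ≤ n) (Ω : Set (MP n k)) (φ : MP n k → EuclideanSpace ℝ (Fin k))
    (a₀ : MP n k) (M : Matrix (Fin k) (HorIdx n k) ℝ) : Prop :=
  UIDcond hk Ω φ a₀ (ofMatrix M)

/-- The condition expressing intrinsic differentiability of `φ` at `a₀` with intrinsic
differential `L`: `lim_{a→a₀} |φ(a) - φ(a₀) - L(a₀⁻¹ ⋆ a)| / d_φ(a,a₀) = 0`. -/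
def IDcond (hk : k ≤ n) (Ω : Set (MP n k)) (φ : MP n k → EuclideanSpace ℝ (Fin k))
    (a₀ : MP n k) (L : MP n k → EuclideanSpace ℝ (Fin k)) : Prop :=
  ∀ ε > (0 : ℝ), ∃ δ > (0 : ℝ), ∀ a ∈ Ω, ‖a - a₀‖ < δ →
    ‖φ a - φ a₀ - L (starMul (-a₀) a)‖ ≤ ε * dPhi hk φ a a₀

/-- `φ` is intrinsic differentiable at `a₀`. -/
def IDAt (hk : k ≤ n) (Ω : Set (MP n k)) (φ : MP n k → EuclideanSpace ℝ (Fin k))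
    (a₀ : MP n k) : Prop :=
  ∃ L, IsStarLinear L ∧ IDcond hk Ω φ a₀ L

/-- `φ` is intrinsic differentiable at `a₀` with intrinsic Jacobian matrix `M`. -/
def IDAtWith (hk : k ≤ n) (Ω : Set (MP n k)) (φ : MP n k → EuclideanSpace ℝ (Fin k))
    (a₀ : MP n k) (M : Matrix (Fin k) (HorIdx n k) ℝ) : Prop :=
  IDcond hk Ω φ a₀ (ofMatrix M)

/-! ### The vector fields `W_j^φ` -/

/-- The `2n-k` vector fields `W^φ` on `MP n k`:
`W_j^φ = ∂_{v_j} - (1/2) w_j ∂_τ`, `∇^{φ_i} = ∂_{η_i} + φ_i ∂_τ`,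
`W^φ = ∂_{w_j} + (1/2) v_j ∂_τ`. -/
def Wfield (φ : MP n k → EuclideanSpace ℝ (Fin k)) (ℓ : HorIdx n k) (p : MP n k) : MP n k :=
  match ℓ with
  | Sum.inl j => mkM (Pi.single j 1) 0 0 (-(1 / 2) * wPart p j)
  | Sum.inr (Sum.inl i) => mkM 0 (Pi.single i 1) 0 (φ p i)
  | Sum.inr (Sum.inr j) => mkM 0 0 (Pi.single j 1) ((1 / 2) * vPart p j)

/-- For `ψ` of class C¹ (Euclidean sense), the intrinsic Jacobian matrix
`J^ψψ(m) = [(W_ℓ^ψ ψ_i)(m)]_{i,ℓ}`. -/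
def JC1 (ψ : MP n k → EuclideanSpace ℝ (Fin k)) (m : MP n k) :
    Matrix (Fin k) (HorIdx n k) ℝ :=
  Matrix.of fun i ℓ => fderiv ℝ ψ m (Wfield ψ ℓ m) i

/-- `φ` has `∂^{φ_ℓ}`-derivative `D` at `a`: along every integral curve of `W_ℓ^φ`
through `a` the difference quotients of `φ` converge to `D`. -/
def HasWDerivAt (Ω : Set (MP n k)) (φ : MP n k → EuclideanSpace ℝ (Fin k)) (ℓ : HorIdx n k)
    (a : MP n k) (D : EuclideanSpace ℝ (Fin k)) : Prop :=
  ∀ δ > (0 : ℝ), ∀ γ : ℝ → MP n k, γ 0 = a →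
    (∀ s ∈ Set.Ioo (-δ) δ, γ s ∈ Ω) →
    (∀ s ∈ Set.Ioo (-δ) δ, HasDerivAt γ (Wfield φ ℓ (γ s)) s) →
    Tendsto (fun s : ℝ => s⁻¹ • (φ (γ s) - φ a)) (𝓝[≠] (0 : ℝ)) (𝓝 D)

/-- The little-½-Hölder condition on `Ω`. -/
def LittleHolder (Ω : Set (MP n k)) (φ : MP n k → EuclideanSpace ℝ (Fin k)) : Prop :=
  ∀ Ω' : Set (MP n k), IsOpen Ω' → IsCompact (closure Ω') → closure Ω' ⊆ Ω →
    ∀ ε > (0 : ℝ), ∃ r > (0 : ℝ), ∀ a ∈ Ω', ∀ b ∈ Ω', a ≠ b → ‖a - b‖ ≤ r →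
      ‖φ a - φ b‖ ≤ ε * Real.sqrt ‖a - b‖

/-! ### `C¹_ℍ` functions on ℍⁿ -/

/-- The horizontal vector fields `X_i`, `Y_i` of ℍⁿ. -/
def Zfield (i : Sum (Fin n) (Fin n)) (p : HP n) : HP n :=
  match i with
  | Sum.inl i => mkH (Pi.single i 1) 0 (-(1 / 2) * yPart p i)
  | Sum.inr i => mkH 0 (Pi.single i 1) ((1 / 2) * xPart p i)

/-- `f : U → ℝ^k` is of class `C¹_ℍ` with horizontal derivatives `Df`: `f` is continuous
on `U`, the `Df p i` are continuous on `U` and represent the distributional derivatives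
of `f` along the horizontal vector fields. -/
def C1H (U : Set (HP n)) (f : HP n → EuclideanSpace ℝ (Fin k))
    (Df : HP n → Sum (Fin n) (Fin n) → EuclideanSpace ℝ (Fin k)) : Prop :=
  ContinuousOn f U ∧ (∀ i, ContinuousOn (fun p => Df p i) U) ∧
    ∀ (i : Sum (Fin n) (Fin n)) (j : Fin k) (ψ : HP n → ℝ),
      ContDiff ℝ (⊤ : ℕ∞) ψ → HasCompactSupport ψ → tsupport ψ ⊆ U →
      (∫ p in U, f p j * fderiv ℝ ψ p (Zfield i p)) = -∫ p in U, Df p i j * ψ p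

/-! ### The quasi-distance ρ_φ -/

/-- The function `ρ_φ(a,b)`. -/
def rhoPhi (φ : MP n k → EuclideanSpace ℝ (Fin k)) (a b : MP n k) : ℝ :=
  max
    (Real.sqrt (∑ j, (vPart a j - vPart b j) ^ 2 + ∑ i, (etaPart a i - etaPart b i) ^ 2 +
      ∑ j, (wPart a j - wPart b j) ^ 2))
    (Real.sqrt |tauPart a - tauPart b +
      (1 / 2) * ∑ i, (φ a i + φ b i) * (etaPart b i - etaPart a i) +
      (1 / 2) * ∑ j, (vPart a j * wPart b j - vPart b j * wPart a j)|)

/-! ### Families of exponential maps -/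

/-- A family of exponential maps for `φ` near `a`, as in Definition 4.2 of the paper. -/
structure ExpFamily (Ω : Set (MP n k)) (φ : MP n k → EuclideanSpace ℝ (Fin k))
    (a : MP n k) where
  δ₁ : ℝ
  δ₂ : ℝ
  pos : 0 < δ₂
  lt : δ₂ < δ₁
  sub : closedCube δ₁ a ⊆ Ω
  E : HorIdx n k → ℝ → MP n k → MP n k
  ω : HorIdx n k → MP n k → EuclideanSpace ℝ (Fin k)
  maps : ∀ ℓ, ∀ s ∈ Set.Icc (-δ₂) δ₂, ∀ b ∈ closedCube δ₂ a, E ℓ s b ∈ closedCube δ₁ a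
  start : ∀ ℓ, ∀ b ∈ closedCube δ₂ a, E ℓ 0 b = b
  isIntegral : ∀ ℓ, ∀ b ∈ closedCube δ₂ a, ∀ s ∈ Set.Icc (-δ₂) δ₂,
    HasDerivAt (fun r => E ℓ r b) (Wfield φ ℓ (E ℓ s b)) s
  contOmega : ∀ ℓ (i : Fin k), ContinuousOn (fun b => ω ℓ b i) Ω
  chain : ∀ ℓ, ∀ b ∈ closedCube δ₂ a, ∀ s ∈ Set.Icc (-δ₂) δ₂, ∀ i : Fin k,
    φ (E ℓ s b) i - φ b i = ∫ r in (0 : ℝ)..s, ω ℓ (E ℓ r b) i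

lemma sum_split (hk : k ≤ n) (f : Fin n → ℝ) :
    ∑ i : Fin n, f i =
      (∑ i : Fin k, f ⟨(i : ℕ), lt_of_lt_of_le i.isLt hk⟩) +
      ∑ j : Fin (n - k), f ⟨(j : ℕ) + k, by have := j.isLt; omega⟩ := by
  classical
  set g : ℕ → ℝ := fun i => if h : i < n then f ⟨i, h⟩ else 0 with hg
  have h0 : ∑ i : Fin n, f i = ∑ i ∈ Finset.range n, g i := by
    rw [← Fin.sum_univ_eq_sum_range]
    exact Finset.sum_congr rfl fun i _ => by simp [hg, i.isLt]
  have h1 : (∑ i : Fin k, f ⟨(i : ℕ), lt_of_lt_of_le i.isLt hk⟩)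
      = ∑ i ∈ Finset.range k, g i := by
    rw [← Fin.sum_univ_eq_sum_range]
    exact Finset.sum_congr rfl fun i _ => by simp [hg, lt_of_lt_of_le i.isLt hk]
  have h2 : (∑ j : Fin (n - k), f ⟨(j : ℕ) + k, by have := j.isLt; omega⟩)
      = ∑ j ∈ Finset.range (n - k), g (k + j) := by
    rw [← Fin.sum_univ_eq_sum_range]
    refine Finset.sum_congr rfl fun j _ => ?_
    have hj : (j : ℕ) + k < n := by have := j.isLt; omega
    simp only [hg]
    rw [dif_pos (by omega : k + (j:ℕ) < n)]
    congr 1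
    exact Fin.ext (by simp [Nat.add_comm])
  rw [h0, h1, h2, ← Finset.sum_range_add_sum_Ico g hk, Finset.sum_Ico_eq_sum_range]

lemma xPart_graphMap (φ : MP n k → EuclideanSpace ℝ (Fin k)) (a : MP n k) (i : Fin n) :
    xPart (graphMap φ a) i = if h : (i : ℕ) < k then φ a ⟨(i : ℕ), h⟩
      else vPart a ⟨(i : ℕ) - k, by have := i.isLt; omega⟩ := by
  simp only [graphMap, hMul, xPart, mkH, Sum.elim_inl, iota, jmap]
  split_ifs with h <;> simp

lemma yPart_graphMap (φ : MP n k → EuclideanSpace ℝ (Fin k)) (a : MP n k) (i : Fin n) :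
    yPart (graphMap φ a) i = if h : (i : ℕ) < k then etaPart a ⟨(i : ℕ), h⟩
      else wPart a ⟨(i : ℕ) - k, by have := i.isLt; omega⟩ := by
  simp only [graphMap, hMul, yPart, mkH, Sum.elim_inl, Sum.elim_inr, iota, jmap]
  split_ifs with h <;> simp

lemma tPart_graphMap (hk : k ≤ n) (φ : MP n k → EuclideanSpace ℝ (Fin k)) (a : MP n k) :
    tPart (graphMap φ a) = tauPart a
      - (1 / 2) * ∑ i : Fin k, φ a i * etaPart a i := by
  simp only [graphMap, hMul, tPart, mkH, Sum.elim_inr, iota, jmap, xPart, yPart, Sum.elim_inl]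
  rw [sum_split hk]
  simp
  ring_nf
example (p q : HP n) (i : Fin n) : xPart (hMul p q) i = xPart p i + xPart q i := rfl
example (q : HP n) (i : Fin n) : xPart (hInv q) i = -(xPart q i) := rfl
example (q : HP n) (i : Fin n) : yPart (hInv q) i = -(yPart q i) := rfl
example (q : HP n) : tPart (hInv q) = -(tPart q) := rfl
example (p q : HP n) (i : Fin n) : yPart (hMul p q) i = yPart p i + yPart q i := rfl
example (p q : HP n) : tPart (hMul p q) = tPart p + tPart q + (1/2) * ∑ i : Fin n, (xPart p i * yPart q i - xPart q i * yPart p i) := rfl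
lemma xPart_P (φ : MP n k → EuclideanSpace ℝ (Fin k)) (a b : MP n k) (i : Fin n) :
    xPart (hMul (hInv (graphMap φ b)) (graphMap φ a)) i =
      if h : (i : ℕ) < k then φ a ⟨(i : ℕ), h⟩ - φ b ⟨(i : ℕ), h⟩
      else vPart a ⟨(i : ℕ) - k, by have := i.isLt; omega⟩
        - vPart b ⟨(i : ℕ) - k, by have := i.isLt; omega⟩ := by
  have e : xPart (hMul (hInv (graphMap φ b)) (graphMap φ a)) i
      = -(xPart (graphMap φ b) i) + xPart (graphMap φ a) i := rfl
  rw [e, xPart_graphMap, xPart_graphMap]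
  split_ifs with h <;> ring

lemma yPart_P (φ : MP n k → EuclideanSpace ℝ (Fin k)) (a b : MP n k) (i : Fin n) :
    yPart (hMul (hInv (graphMap φ b)) (graphMap φ a)) i =
      if h : (i : ℕ) < k then etaPart a ⟨(i : ℕ), h⟩ - etaPart b ⟨(i : ℕ), h⟩
      else wPart a ⟨(i : ℕ) - k, by have := i.isLt; omega⟩
        - wPart b ⟨(i : ℕ) - k, by have := i.isLt; omega⟩ := by
  have e : yPart (hMul (hInv (graphMap φ b)) (graphMap φ a)) i
      = -(yPart (graphMap φ b) i) + yPart (graphMap φ a) i := rfl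
  rw [e, yPart_graphMap, yPart_graphMap]
  split_ifs with h <;> ring

set_option maxHeartbeats 1000000 in
lemma tPart_P (hk : k ≤ n) (φ : MP n k → EuclideanSpace ℝ (Fin k)) (a b : MP n k) :
    tPart (hMul (hInv (graphMap φ b)) (graphMap φ a)) =
      tauPart a - tauPart b +
      (1 / 2) * ∑ i : Fin k, (φ a i + φ b i) * (etaPart b i - etaPart a i) +
      (1 / 2) * ∑ j : Fin (n - k), (vPart a j * wPart b j - vPart b j * wPart a j) := by
  have e : tPart (hMul (hInv (graphMap φ b)) (graphMap φ a))
      = -(tPart (graphMap φ b)) + tPart (graphMap φ a)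
        + (1 / 2) * ∑ i : Fin n, ((-(xPart (graphMap φ b) i)) * yPart (graphMap φ a) i
            - xPart (graphMap φ a) i * (-(yPart (graphMap φ b) i))) := rfl
  rw [e, tPart_graphMap hk, tPart_graphMap hk, sum_split hk]
  have h1 : (∑ i : Fin k, ((-(xPart (graphMap φ b) ⟨(i:ℕ), lt_of_lt_of_le i.isLt hk⟩))
        * yPart (graphMap φ a) ⟨(i:ℕ), lt_of_lt_of_le i.isLt hk⟩
        - xPart (graphMap φ a) ⟨(i:ℕ), lt_of_lt_of_le i.isLt hk⟩
          * (-(yPart (graphMap φ b) ⟨(i:ℕ), lt_of_lt_of_le i.isLt hk⟩))))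
      = ∑ i : Fin k, (φ a i * etaPart b i - φ b i * etaPart a i) := by
    refine Finset.sum_congr rfl fun i _ => ?_
    rw [xPart_graphMap, xPart_graphMap, yPart_graphMap, yPart_graphMap]
    simp only [Fin.val_mk, dif_pos i.isLt, Fin.eta]
    ring
  have h2 : (∑ j : Fin (n - k), ((-(xPart (graphMap φ b) ⟨(j:ℕ) + k, by have := j.isLt; omega⟩))
        * yPart (graphMap φ a) ⟨(j:ℕ) + k, by have := j.isLt; omega⟩
        - xPart (graphMap φ a) ⟨(j:ℕ) + k, by have := j.isLt; omega⟩
          * (-(yPart (graphMap φ b) ⟨(j:ℕ) + k, by have := j.isLt; omega⟩))))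
      = ∑ j : Fin (n - k), (vPart a j * wPart b j - vPart b j * wPart a j) := by
    refine Finset.sum_congr rfl fun j _ => ?_
    rw [xPart_graphMap, xPart_graphMap, yPart_graphMap, yPart_graphMap]
    have hnot : ¬ ((j:ℕ) + k < k) := by omega
    simp only [Fin.val_mk, dif_neg hnot]
    have hmk : (⟨(j:ℕ) + k - k, by have := j.isLt; omega⟩ : Fin (n - k)) = j :=
      Fin.ext (by simp)
    rw [hmk]
    ring
  rw [h1, h2]
  have h3 : ∑ i : Fin k, (φ a i + φ b i) * (etaPart b i - etaPart a i)
      = ∑ i : Fin k, (φ a i * etaPart b i - φ b i * etaPart a i)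
        - ∑ i : Fin k, φ a i * etaPart a i + ∑ i : Fin k, φ b i * etaPart b i := by
    rw [← Finset.sum_sub_distrib, ← Finset.sum_add_distrib]
    exact Finset.sum_congr rfl fun i _ => by ring
  rw [h3]; ring
lemma hmk_aux {j : Fin (n - k)} :
    (⟨(j:ℕ) + k - k, by have := j.isLt; omega⟩ : Fin (n - k)) = j := Fin.ext (by simp)

lemma sumsq_x (hk : k ≤ n) (φ : MP n k → EuclideanSpace ℝ (Fin k)) (a b : MP n k) :
    ∑ i : Fin n, xPart (hMul (hInv (graphMap φ b)) (graphMap φ a)) i ^ 2 =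
      ∑ i : Fin k, (φ a i - φ b i) ^ 2 + ∑ j : Fin (n - k), (vPart a j - vPart b j) ^ 2 := by
  rw [sum_split hk]
  congr 1
  · refine Finset.sum_congr rfl fun i _ => ?_
    rw [xPart_P]
    simp only [Fin.val_mk, dif_pos i.isLt, Fin.eta]
  · refine Finset.sum_congr rfl fun j _ => ?_
    rw [xPart_P]
    simp only [Fin.val_mk, dif_neg (by omega : ¬ ((j:ℕ) + k < k)), hmk_aux]

lemma sumsq_y (hk : k ≤ n) (φ : MP n k → EuclideanSpace ℝ (Fin k)) (a b : MP n k) :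
    ∑ i : Fin n, yPart (hMul (hInv (graphMap φ b)) (graphMap φ a)) i ^ 2 =
      ∑ i : Fin k, (etaPart a i - etaPart b i) ^ 2
        + ∑ j : Fin (n - k), (wPart a j - wPart b j) ^ 2 := by
  rw [sum_split hk]
  congr 1
  · refine Finset.sum_congr rfl fun i _ => ?_
    rw [yPart_P]
    simp only [Fin.val_mk, dif_pos i.isLt, Fin.eta]
  · refine Finset.sum_congr rfl fun j _ => ?_
    rw [yPart_P]
    simp only [Fin.val_mk, dif_neg (by omega : ¬ ((j:ℕ) + k < k)), hmk_aux]
lemma vPart_piM (hk : k ≤ n) (φ : MP n k → EuclideanSpace ℝ (Fin k)) (a b : MP n k)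
    (j : Fin (n - k)) :
    vPart (piM hk (hMul (hInv (graphMap φ b)) (graphMap φ a))) j
      = vPart a j - vPart b j := by
  show xPart (hMul (hInv (graphMap φ b)) (graphMap φ a)) ⟨(j:ℕ) + k, by have := j.isLt; omega⟩ = _
  rw [xPart_P]
  simp only [Fin.val_mk, dif_neg (by omega : ¬ ((j:ℕ) + k < k)), hmk_aux]

lemma etaPart_piM (hk : k ≤ n) (φ : MP n k → EuclideanSpace ℝ (Fin k)) (a b : MP n k)
    (i : Fin k) :
    etaPart (piM hk (hMul (hInv (graphMap φ b)) (graphMap φ a))) i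
      = etaPart a i - etaPart b i := by
  show yPart (hMul (hInv (graphMap φ b)) (graphMap φ a)) ⟨(i:ℕ), lt_of_lt_of_le i.isLt hk⟩ = _
  rw [yPart_P]
  simp only [Fin.val_mk, dif_pos i.isLt, Fin.eta]

lemma wPart_piM (hk : k ≤ n) (φ : MP n k → EuclideanSpace ℝ (Fin k)) (a b : MP n k)
    (j : Fin (n - k)) :
    wPart (piM hk (hMul (hInv (graphMap φ b)) (graphMap φ a))) j
      = wPart a j - wPart b j := by
  show yPart (hMul (hInv (graphMap φ b)) (graphMap φ a)) ⟨(j:ℕ) + k, by have := j.isLt; omega⟩ = _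
  rw [yPart_P]
  simp only [Fin.val_mk, dif_neg (by omega : ¬ ((j:ℕ) + k < k)), hmk_aux]

lemma tauPart_piM (hk : k ≤ n) (φ : MP n k → EuclideanSpace ℝ (Fin k)) (a b : MP n k) :
    tauPart (piM hk (hMul (hInv (graphMap φ b)) (graphMap φ a)))
      = tPart (hMul (hInv (graphMap φ b)) (graphMap φ a))
        + (1 / 2) * ∑ i : Fin k, (φ a i - φ b i) * (etaPart a i - etaPart b i) := by
  show tPart _ + (1/2) * ∑ i : Fin k,
      xPart (hMul (hInv (graphMap φ b)) (graphMap φ a)) ⟨(i:ℕ), lt_of_lt_of_le i.isLt hk⟩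
      * yPart (hMul (hInv (graphMap φ b)) (graphMap φ a)) ⟨(i:ℕ), lt_of_lt_of_le i.isLt hk⟩ = _
  congr 1
  congr 1
  refine Finset.sum_congr rfl fun i _ => ?_
  rw [xPart_P, yPart_P]
  simp only [Fin.val_mk, dif_pos i.isLt, Fin.eta]
set_option maxHeartbeats 1000000

/-- from the proof of Proposition 5.6: for all `a, b ∈ Ω`,
`ρ_φ(a,b) ≤ ‖Φ(b)⁻¹ · Φ(a)‖_∞ ≤ d_φ(a,b) + |φ(a) - φ(b)|`. -/
theorem statement19 (n k : ℕ) (hn : 1 ≤ n) (hk1 : 1 ≤ k) (hk : k ≤ n)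
    (Ω : Set (MP n k)) (hΩ : IsOpen Ω)
    (φ : MP n k → EuclideanSpace ℝ (Fin k)) (hφ : ContinuousOn φ Ω) :
    ∀ a ∈ Ω, ∀ b ∈ Ω,
      rhoPhi φ a b ≤ normH (hMul (hInv (graphMap φ b)) (graphMap φ a)) ∧
      normH (hMul (hInv (graphMap φ b)) (graphMap φ a)) ≤
        dPhi hk φ a b + ‖φ a - φ b‖ := by

  intro a _ b _
  -- abbreviations
  set SS : ℝ := ∑ i : Fin k, (φ a i - φ b i) ^ 2 with hSS
  set A2 : ℝ := ∑ j : Fin (n - k), (vPart a j - vPart b j) ^ 2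
      + ∑ i : Fin k, (etaPart a i - etaPart b i) ^ 2
      + ∑ j : Fin (n - k), (wPart a j - wPart b j) ^ 2 with hA2
  set T : ℝ := tauPart a - tauPart b +
      (1 / 2) * ∑ i : Fin k, (φ a i + φ b i) * (etaPart b i - etaPart a i) +
      (1 / 2) * ∑ j : Fin (n - k), (vPart a j * wPart b j - vPart b j * wPart a j) with hTd
  set C : ℝ := ∑ i : Fin k, (φ a i - φ b i) * (etaPart a i - etaPart b i) with hC
  set T' : ℝ := T + (1 / 2) * C with hT'
  have hSSnn : 0 ≤ SS := Finset.sum_nonneg fun i _ => sq_nonneg _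
  have hA2nn : 0 ≤ A2 := by
    have h1 : 0 ≤ ∑ j : Fin (n - k), (vPart a j - vPart b j) ^ 2 :=
      Finset.sum_nonneg fun i _ => sq_nonneg _
    have h2 : 0 ≤ ∑ i : Fin k, (etaPart a i - etaPart b i) ^ 2 :=
      Finset.sum_nonneg fun i _ => sq_nonneg _
    have h3 : 0 ≤ ∑ j : Fin (n - k), (wPart a j - wPart b j) ^ 2 :=
      Finset.sum_nonneg fun i _ => sq_nonneg _
    linarith
  have hEta : ∑ i : Fin k, (etaPart a i - etaPart b i) ^ 2 ≤ A2 := by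
    have h1 : 0 ≤ ∑ j : Fin (n - k), (vPart a j - vPart b j) ^ 2 :=
      Finset.sum_nonneg fun i _ => sq_nonneg _
    have h3 : 0 ≤ ∑ j : Fin (n - k), (wPart a j - wPart b j) ^ 2 :=
      Finset.sum_nonneg fun i _ => sq_nonneg _
    rw [hA2]; linarith
  -- norm of the product
  have hnormH : normH (hMul (hInv (graphMap φ b)) (graphMap φ a))
      = max (Real.sqrt (SS + A2)) (Real.sqrt |T|) := by
    unfold normH
    rw [sumsq_x hk φ a b, sumsq_y hk φ a b, tPart_P hk φ a b]
    congr 2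
    rw [hSS, hA2]; ring
  -- rhoPhi
  have hrho : rhoPhi φ a b = max (Real.sqrt A2) (Real.sqrt |T|) := by
    unfold rhoPhi
    rfl
  -- dPhi
  have hdphi : dPhi hk φ a b = max (Real.sqrt A2) (Real.sqrt |T'|) := by
    unfold dPhi normM
    rw [tauPart_piM hk φ a b, tPart_P hk φ a b]
    congr 2
    · rw [hA2]
      congr 1
      · congr 1
        · exact Finset.sum_congr rfl fun j _ => by rw [vPart_piM hk φ a b]
        · exact Finset.sum_congr rfl fun i _ => by rw [etaPart_piM hk φ a b]
      · exact Finset.sum_congr rfl fun j _ => by rw [wPart_piM hk φ a b]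
  -- norm of φ a - φ b
  have hphin : ‖φ a - φ b‖ = Real.sqrt SS := by
    rw [EuclideanSpace.norm_eq]
    congr 1
    refine Finset.sum_congr rfl fun i _ => ?_
    have : (φ a - φ b) i = φ a i - φ b i := rfl
    rw [this, Real.norm_eq_abs, sq_abs]
  -- Cauchy-Schwarz
  have hCS : |C| ≤ Real.sqrt SS * Real.sqrt A2 := by
    have h1 := Finset.sum_mul_sq_le_sq_mul_sq Finset.univ
      (fun i : Fin k => φ a i - φ b i) (fun i => etaPart a i - etaPart b i)
    have h2 : C ^ 2 ≤ SS * A2 := by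
      have : SS * (∑ i : Fin k, (etaPart a i - etaPart b i) ^ 2) ≤ SS * A2 :=
        mul_le_mul_of_nonneg_left hEta hSSnn
      calc C ^ 2 ≤ SS * ∑ i : Fin k, (etaPart a i - etaPart b i) ^ 2 := h1
        _ ≤ SS * A2 := this
    calc |C| = Real.sqrt (C ^ 2) := (Real.sqrt_sq_eq_abs C).symm
      _ ≤ Real.sqrt (SS * A2) := Real.sqrt_le_sqrt h2
      _ = Real.sqrt SS * Real.sqrt A2 := Real.sqrt_mul hSSnn _
  rw [hnormH, hrho, hdphi, hphin]
  set D : ℝ := max (Real.sqrt A2) (Real.sqrt |T'|) with hD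
  have hDnn : 0 ≤ D := le_trans (Real.sqrt_nonneg A2) (le_max_left _ _)
  have hNnn : 0 ≤ Real.sqrt SS := Real.sqrt_nonneg _
  have hAD : Real.sqrt A2 ≤ D := le_max_left _ _
  have hA2D : A2 ≤ D ^ 2 := by
    calc A2 = Real.sqrt A2 ^ 2 := (Real.sq_sqrt hA2nn).symm
      _ ≤ D ^ 2 := by nlinarith [Real.sqrt_nonneg A2]
  have hTD : |T'| ≤ D ^ 2 := by
    have h := le_max_right (Real.sqrt A2) (Real.sqrt |T'|)
    calc |T'| = Real.sqrt |T'| ^ 2 := (Real.sq_sqrt (abs_nonneg _)).symm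
      _ ≤ D ^ 2 := by nlinarith [Real.sqrt_nonneg |T'|]
  constructor
  · exact max_le_max (Real.sqrt_le_sqrt (by linarith)) le_rfl
  · apply max_le
    · have h1 : SS + A2 ≤ (D + Real.sqrt SS) ^ 2 := by
        have hs : SS = Real.sqrt SS ^ 2 := (Real.sq_sqrt hSSnn).symm
        nlinarith [Real.sqrt_nonneg SS]
      calc Real.sqrt (SS + A2) ≤ Real.sqrt ((D + Real.sqrt SS) ^ 2) := Real.sqrt_le_sqrt h1
        _ = D + Real.sqrt SS := Real.sqrt_sq (by linarith)
    · have hTT : |T| ≤ (D + Real.sqrt SS) ^ 2 := by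
        have h1 : |T| ≤ |T'| + (1 / 2) * |C| := by
          have : T = T' - (1 / 2) * C := by rw [hT']; ring
          rw [this]
          calc |T' - (1/2) * C| ≤ |T'| + |(1/2) * C| := abs_sub _ _
            _ = |T'| + (1/2) * |C| := by rw [abs_mul]; norm_num
        have h2 : Real.sqrt A2 * Real.sqrt SS ≤ D * Real.sqrt SS :=
          mul_le_mul_of_nonneg_right hAD hNnn
        nlinarith [hCS, hTD]
      calc Real.sqrt |T| ≤ Real.sqrt ((D + Real.sqrt SS) ^ 2) := Real.sqrt_le_sqrt hTT
        _ = D + Real.sqrt SS := Real.sqrt_sq (by linarith)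
end HeisGraph
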